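/- The codewords of E_10 of Hamming weight 4 are exactly the 30 vectors of the form λ·χ(B_i ∪ B_j) for λ ∈ {1, ω, ϖ} and 1 ≤ i < j ≤ 5, where χ(B_i ∪ B_j) ∈ GF(4)^{10} is the vector equal to 1 on the two blocks B_i and B_j and 0 elsewhere. -/

import Mathlib

open scoped BigOperators

section Defs

variable {F : Type} [Field F] [DecidableEq F]

/-- The binary coordinate in column `j` (0-indexed), row `k`. -/
def idx (j : Fin 10) (k : Fin 4) : Fin 40 :=
  ⟨4 * j.val + k.val, by have := j.isLt; have := k.isLt; omega⟩

/-- The map φ : GF(4) → 𝔽₂⁴, 0↦0000, 1↦0011, ω↦0101, ϖ↦0110. -/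
def phi (ω : F) : F → (Fin 4 → ZMod 2) := fun x =>
  if x = 0 then ![0, 0, 0, 0]
  else if x = 1 then ![0, 0, 1, 1]
  else if x = ω then ![0, 1, 0, 1]
  else ![0, 1, 1, 0]

/-- Ĉ : the image of a quaternary code under coordinatewise φ. -/
def hatSet (ω : F) (C : Set (Fin 10 → F)) : Set (Fin 40 → ZMod 2) :=
  { v | ∃ c ∈ C, ∀ (j : Fin 10) (k : Fin 4), v (idx j k) = phi ω (c j) k }

/-- d₄¹⁰ : binary vectors of length 40 constant on each of the ten columns. -/
def d4ten : Set (Fin 40 → ZMod 2) :=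
  { v | ∀ (j : Fin 10) (k k' : Fin 4), v (idx j k) = v (idx j k') }

/-- (d₄¹⁰)₀ : the subcode of d₄¹⁰ of codewords of weight divisible by 8. -/
def d4ten0 : Set (Fin 40 → ZMod 2) :=
  { v | v ∈ d4ten ∧ 8 ∣ hammingNorm v }

/-- The generator 1000 1000 ... 1000 of e_C. -/
def eCvec : Fin 40 → ZMod 2 := fun i => if i.val % 4 = 0 then 1 else 0

/-- The generator 1000 (×9) 0111 of e_B. -/
def eBvec : Fin 40 → ZMod 2 := fun i =>
  if i.val < 36 then (if i.val % 4 = 0 then 1 else 0)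
  else (if i.val % 4 = 0 then 0 else 1)

/-- ρ_C(C) = Ĉ + (d₄¹⁰)₀ + e_C. -/
def rhoC (ω : F) (C : Set (Fin 10 → F)) : Set (Fin 40 → ZMod 2) :=
  { v | ∃ a ∈ hatSet ω C, ∃ b ∈ d4ten0,
      ∃ e ∈ ({0, eCvec} : Set (Fin 40 → ZMod 2)), v = a + b + e }

/-- ρ_B(C) = Ĉ + (d₄¹⁰)₀ + e_B. -/
def rhoB (ω : F) (C : Set (Fin 10 → F)) : Set (Fin 40 → ZMod 2) :=
  { v | ∃ a ∈ hatSet ω C, ∃ b ∈ d4ten0,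
      ∃ e ∈ ({0, eBvec} : Set (Fin 40 → ZMod 2)), v = a + b + e }

/-- The trace inner product x⋆y = Σ Tr(xᵢ ȳᵢ), computed in GF(4) (its value lies
in the prime subfield GF(2)). -/
def traceIP (x y : Fin 10 → F) : F :=
  ∑ i, ((x i * (y i) ^ 2) + (x i * (y i) ^ 2) ^ 2)

/-- The dual of an additive code with respect to the trace inner product. -/
def addDual (C : Set (Fin 10 → F)) : Set (Fin 10 → F) :=
  { x | ∀ c ∈ C, traceIP x c = 0 }

/-- The dual of a binary code of length 40 under the standard inner product. -/
def binDual (S : Set (Fin 40 → ZMod 2)) : Set (Fin 40 → ZMod 2) :=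
  { x | ∀ c ∈ S, ∑ i, x i * c i = 0 }

/-- The dual of a quaternary code under the Hermitian inner product ⟨x,y⟩ = Σ xᵢ ȳᵢ. -/
def hermDual (S : Set (Fin 10 → F)) : Set (Fin 10 → F) :=
  { x | ∀ c ∈ S, ∑ i, x i * (c i) ^ 2 = 0 }

/-- The Hermitian self-dual [10,5,4] code E₁₀ over GF(4). -/
def E10 (ω : F) : Submodule F (Fin 10 → F) :=
  Submodule.span F {![1,1,1,1,0,0,0,0,0,0], ![0,0,1,1,1,1,0,0,0,0],
    ![0,0,0,0,1,1,1,1,0,0], ![0,0,0,0,0,0,1,1,1,1],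
    ![1,0,1,0,1,0,1,0,ω,ω^2]}

/-- The Hermitian self-dual [10,5,4] code B₁₀ over GF(4). -/
def B10 (ω : F) : Submodule F (Fin 10 → F) :=
  Submodule.span F {![1,1,1,1,0,0,0,0,0,0], ![0,1,ω,ω^2,1,0,0,0,0,0],
    ![0,0,0,0,0,1,1,1,1,0], ![0,0,0,0,0,0,1,ω,ω^2,1],
    ![0,1,ω^2,ω,0,0,1,ω^2,ω,0]}

/-- Interpret a bit as an element of GF(4). -/
def b2f (x : ZMod 2) : F := if x = 1 then 1 else 0

/-- The projection 𝔽₂⁴⁰ → GF(4)¹⁰ : column j ↦ v₂ᵢₙ·1 + v·ω + v·ϖ with row labels 0,1,ω,ϖ. -/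
def Proj (ω : F) (v : Fin 40 → ZMod 2) : Fin 10 → F := fun j =>
  b2f (v (idx j 1)) * 1 + b2f (v (idx j 2)) * ω + b2f (v (idx j 3)) * ω ^ 2

/-- The parity of column j (1 = odd number of ones). -/
def colPar (v : Fin 40 → ZMod 2) (j : Fin 10) : ZMod 2 := ∑ k, v (idx j k)

/-- The parity of the top row (1 = odd number of ones). -/
def topPar (v : Fin 40 → ZMod 2) : ZMod 2 := ∑ j, v (idx j 0)

/-- The coordinate permutation of Fin 10 permuting the five blocks {2m, 2m+1}
as units according to π, preserving order within blocks. -/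
def blockPerm (π : Equiv.Perm (Fin 5)) : Fin 10 → Fin 10 := fun t =>
  ⟨2 * (π ⟨t.val / 2, by have := t.isLt; omega⟩).val + t.val % 2, by
    have := (π ⟨t.val / 2, by have := t.isLt; omega⟩).isLt; have := t.isLt; omega⟩

/-- The coordinate permutation of Fin 10 interchanging the two coordinates within
each block belonging to S, fixing all other coordinates. -/
def blockSwap (S : Finset (Fin 5)) : Fin 10 → Fin 10 := fun t =>
  if (⟨t.val / 2, by have := t.isLt; omega⟩ : Fin 5) ∈ S then
    ⟨2 * (t.val / 2) + (1 - t.val % 2), by have := t.isLt; omega⟩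
  else t

end Defs

private lemma pick_aux : ∀ s : Fin 5 → Bool,
    ((if s 0 then 1 else 0) + (if s 1 then 1 else 0) + (if s 2 then 1 else 0) +
      (if s 3 then 1 else 0) + (if s 4 then 1 else 0) = (2:ℕ)) →
    ∃ i j : Fin 5, i < j ∧ s i = true ∧ s j = true ∧
      ∀ m : Fin 5, m ≠ i → m ≠ j → s m = false := by decide

private lemma hn_ten {F : Type} [Field F] [DecidableEq F]
    (x0 x1 x2 x3 x4 x5 x6 x7 x8 x9 : F) :
    hammingNorm ![x0,x1,x2,x3,x4,x5,x6,x7,x8,x9] =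
      (if x0 = 0 then 0 else 1) + (if x1 = 0 then 0 else 1) + (if x2 = 0 then 0 else 1) +
      (if x3 = 0 then 0 else 1) + (if x4 = 0 then 0 else 1) + (if x5 = 0 then 0 else 1) +
      (if x6 = 0 then 0 else 1) + (if x7 = 0 then 0 else 1) + (if x8 = 0 then 0 else 1) +
      (if x9 = 0 then 0 else 1) := by
  simp only [hammingNorm, Finset.card_filter, Fin.sum_univ_succ, Matrix.cons_val_zero,
    Matrix.cons_val_succ, Finset.univ_eq_empty, Finset.sum_empty, ne_eq, ite_not]
  simp only [add_assoc, add_zero]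
  rfl

/-- The weight-4 codewords of E₁₀ are exactly the 30 vectors
λ·χ(Bᵢ ∪ Bⱼ), λ ∈ {1, ω, ϖ}, 1 ≤ i < j ≤ 5. -/
theorem stmt_7 (F : Type) [Field F] [Fintype F] [DecidableEq F]
    (hF : Fintype.card F = 4) (ω : F) (hω : ω ^ 2 = ω + 1) :
    {v : Fin 10 → F | v ∈ E10 ω ∧ hammingNorm v = 4} =
      {v : Fin 10 → F | ∃ lam : F, (lam = 1 ∨ lam = ω ∨ lam = ω ^ 2) ∧
        ∃ i j : Fin 5, i < j ∧
          v = fun t : Fin 10 =>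
            if t.val / 2 = i.val ∨ t.val / 2 = j.val then lam else 0} ∧
    Nat.card {v : Fin 10 → F // v ∈ E10 ω ∧ hammingNorm v = 4} = 30 := by
  have h4 : (4 : F) = 0 := by
    have h := FiniteField.cast_card_eq_zero F
    rw [hF] at h; exact_mod_cast h
  have two0 : (2 : F) = 0 := by
    have h : (2:F) * 2 = 0 := by linear_combination h4
    rcases mul_eq_zero.mp h with h | h <;> exact h
  have hω0 : ω ≠ 0 := fun h => one_ne_zero (α := F) (by linear_combination (ω - 1) * h - hω)
  have hω1 : ω ≠ 1 := fun h => one_ne_zero (α := F) (by linear_combination hω - ω * h + two0)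
  have hω21 : ω ^ 2 ≠ 1 := fun h => hω0 (by linear_combination h - hω)
  have hω2ω : ω ^ 2 ≠ ω := fun h => one_ne_zero (α := F) (by linear_combination h - hω)
  have hω20 : ω ^ 2 ≠ 0 := pow_ne_zero 2 hω0
  have huniv : ∀ x : F, x = 0 ∨ x = 1 ∨ x = ω ∨ x = ω ^ 2 := by
    intro x
    have hcard : ({0, 1, ω, ω ^ 2} : Finset F) = Finset.univ := by
      apply Finset.eq_univ_of_card
      rw [hF]
      have n1 : (0:F) ∉ ({1, ω, ω^2} : Finset F) := by
        simp only [Finset.mem_insert, Finset.mem_singleton]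
        push_neg
        exact ⟨fun h => one_ne_zero h.symm, fun h => hω0 h.symm, fun h => hω20 h.symm⟩
      have n2 : (1:F) ∉ ({ω, ω^2} : Finset F) := by
        simp only [Finset.mem_insert, Finset.mem_singleton]
        push_neg
        exact ⟨fun h => hω1 h.symm, fun h => hω21 h.symm⟩
      have n3 : ω ∉ ({ω^2} : Finset F) := by
        simp only [Finset.mem_singleton]
        exact fun h => hω2ω h.symm
      rw [Finset.card_insert_of_notMem n1, Finset.card_insert_of_notMem n2,
        Finset.card_insert_of_notMem n3, Finset.card_singleton]
    have hx : x ∈ ({0,1,ω,ω^2} : Finset F) := hcard ▸ Finset.mem_univ x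
    simpa using hx
  have hmem : ∀ v : Fin 10 → F, v ∈ E10 ω ↔ ∃ c1 c2 c3 c4 c5 : F,
      v = ![c1+c5, c1, c1+c2+c5, c1+c2, c2+c3+c5, c2+c3, c3+c4+c5, c3+c4, c4+ω*c5, c4+ω^2*c5] := by
    intro v
    simp only [E10, Submodule.mem_span_insert, Submodule.mem_span_singleton]
    constructor
    · rintro ⟨a1, _, ⟨a2, _, ⟨a3, _, ⟨a4, _, ⟨a5, rfl⟩, rfl⟩, rfl⟩, rfl⟩, rfl⟩
      refine ⟨a1, a2, a3, a4, a5, ?_⟩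
      simp only [Matrix.smul_cons, Matrix.smul_empty, Matrix.add_cons, Matrix.head_cons,
        Matrix.tail_cons, Matrix.empty_add_empty, smul_eq_mul, funext_iff,
        Fin.forall_fin_succ, Matrix.cons_val_zero, Matrix.cons_val_succ]
      norm_num
      and_intros <;> ring
    · rintro ⟨c1, c2, c3, c4, c5, rfl⟩
      refine ⟨c1, _, ⟨c2, _, ⟨c3, _, ⟨c4, _, ⟨c5, rfl⟩, rfl⟩, rfl⟩, rfl⟩, ?_⟩
      simp only [Matrix.smul_cons, Matrix.smul_empty, Matrix.add_cons, Matrix.head_cons,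
        Matrix.tail_cons, Matrix.empty_add_empty, smul_eq_mul, funext_iff,
        Fin.forall_fin_succ, Matrix.cons_val_zero, Matrix.cons_val_succ]
      norm_num
      and_intros <;> ring
  have hset : {v : Fin 10 → F | v ∈ E10 ω ∧ hammingNorm v = 4} =
      {v : Fin 10 → F | ∃ lam : F, (lam = 1 ∨ lam = ω ∨ lam = ω ^ 2) ∧
        ∃ i j : Fin 5, i < j ∧
          v = fun t : Fin 10 =>
            if t.val / 2 = i.val ∨ t.val / 2 = j.val then lam else 0} := by
    ext v
    simp only [Set.mem_setOf_eq]
    constructor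
    · rintro ⟨hv, hn⟩
      obtain ⟨c1, c2, c3, c4, c5, rfl⟩ := (hmem _).mp hv
      rw [hn_ten] at hn
      have hc5 : c5 = 0 := by
        by_contra h5
        have q1 : 1 ≤ (if c1 + c5 = 0 then (0:ℕ) else 1) + (if c1 = 0 then 0 else 1) := by
          rcases eq_or_ne c1 0 with h | h
          · have : c1 + c5 ≠ 0 := fun hh => h5 (by linear_combination hh - h)
            rw [if_neg this, if_pos h]
          · simp [h]
        have q2 : 1 ≤ (if c1 + c2 + c5 = 0 then (0:ℕ) else 1) + (if c1 + c2 = 0 then 0 else 1) := by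
          rcases eq_or_ne (c1 + c2) 0 with h | h
          · have : c1 + c2 + c5 ≠ 0 := fun hh => h5 (by linear_combination hh - h)
            rw [if_neg this, if_pos h]
          · simp [h]
        have q3 : 1 ≤ (if c2 + c3 + c5 = 0 then (0:ℕ) else 1) + (if c2 + c3 = 0 then 0 else 1) := by
          rcases eq_or_ne (c2 + c3) 0 with h | h
          · have : c2 + c3 + c5 ≠ 0 := fun hh => h5 (by linear_combination hh - h)
            rw [if_neg this, if_pos h]
          · simp [h]
        have q4 : 1 ≤ (if c3 + c4 + c5 = 0 then (0:ℕ) else 1) + (if c3 + c4 = 0 then 0 else 1) := by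
          rcases eq_or_ne (c3 + c4) 0 with h | h
          · have : c3 + c4 + c5 ≠ 0 := fun hh => h5 (by linear_combination hh - h)
            rw [if_neg this, if_pos h]
          · simp [h]
        have q5 : 1 ≤ (if c4 + ω * c5 = 0 then (0:ℕ) else 1) + (if c4 + ω ^ 2 * c5 = 0 then 0 else 1) := by
          rcases eq_or_ne (c4 + ω * c5) 0 with h | h
          · have : c4 + ω ^ 2 * c5 ≠ 0 := fun hh => h5 (by linear_combination hh - h - c5 * hω)
            rw [if_neg this, if_pos h]
          · simp [h]
        linarith
      subst hc5
      simp only [add_zero, mul_zero] at hn ⊢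
      obtain ⟨i, j, hij, hsi, hsj, hz⟩ := pick_aux
        (fun m => !decide ((![c1, c1+c2, c2+c3, c3+c4, c4] : Fin 5 → F) m = 0)) (by
          have conv : ∀ (P : Prop) (_ : Decidable P),
              (if (!decide P) = true then (1:ℕ) else 0) = if P then 0 else 1 := by
            intro P hP
            by_cases h : P <;> simp [h]
          rw [conv, conv, conv, conv, conv]
          simp only [Matrix.cons_val_zero, Matrix.cons_val_one, Matrix.head_cons,
            Matrix.cons_val_two, Matrix.tail_cons, Matrix.cons_val_three, Matrix.cons_val_four]
          by_cases e1 : c1 = 0 <;> by_cases e2 : c1 + c2 = 0 <;> by_cases e3 : c2 + c3 = 0 <;>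
            by_cases e4 : c3 + c4 = 0 <;> by_cases e5 : c4 = 0 <;>
            simp only [e1, e2, e3, e4, e5, if_true, if_false] at hn ⊢ <;> omega)
      have hbi : (![c1, c1+c2, c2+c3, c3+c4, c4] : Fin 5 → F) i ≠ 0 := by simpa using hsi
      have hbz : ∀ m : Fin 5, m ≠ i → m ≠ j →
          (![c1, c1+c2, c2+c3, c3+c4, c4] : Fin 5 → F) m = 0 := fun m h1 h2 => by
        simpa using hz m h1 h2
      have hsum' : ∑ m : Fin 5, (![c1, c1+c2, c2+c3, c3+c4, c4] : Fin 5 → F) m = 0 := by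
        rw [Fin.sum_univ_five]
        simp only [Matrix.cons_val_zero, Matrix.cons_val_one, Matrix.head_cons,
          Matrix.cons_val_two, Matrix.tail_cons, Matrix.cons_val_three, Matrix.cons_val_four]
        linear_combination (c1 + c2 + c3 + c4) * two0
      have hbji : (![c1, c1+c2, c2+c3, c3+c4, c4] : Fin 5 → F) i +
          (![c1, c1+c2, c2+c3, c3+c4, c4] : Fin 5 → F) j = 0 := by
        have hsub : ∑ m ∈ ({i, j} : Finset (Fin 5)), (![c1, c1+c2, c2+c3, c3+c4, c4] : Fin 5 → F) m
            = ∑ m : Fin 5, (![c1, c1+c2, c2+c3, c3+c4, c4] : Fin 5 → F) m :=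
          Finset.sum_subset (Finset.subset_univ _) (fun m _ hm => by
            simp only [Finset.mem_insert, Finset.mem_singleton] at hm
            push_neg at hm
            exact hbz m hm.1 hm.2)
        rw [Finset.sum_pair hij.ne] at hsub
        rw [hsub, hsum']
      have hbj_eq : (![c1, c1+c2, c2+c3, c3+c4, c4] : Fin 5 → F) j =
          (![c1, c1+c2, c2+c3, c3+c4, c4] : Fin 5 → F) i := by
        linear_combination hbji - (![c1, c1+c2, c2+c3, c3+c4, c4] : Fin 5 → F) i * two0
      have hrep : ∀ m : Fin 5, (![c1, c1+c2, c2+c3, c3+c4, c4] : Fin 5 → F) m =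
          if (m.val = i.val ∨ m.val = j.val) then (![c1, c1+c2, c2+c3, c3+c4, c4] : Fin 5 → F) i
          else 0 := by
        intro m
        split_ifs with h
        · rcases h with h | h
          · rw [show m = i from Fin.ext h]
          · rw [show m = j from Fin.ext h, hbj_eq]
        · push_neg at h
          exact hbz m (fun e => h.1 (by rw [e])) (fun e => h.2 (by rw [e]))
      refine ⟨(![c1, c1+c2, c2+c3, c3+c4, c4] : Fin 5 → F) i,
        (huniv _).resolve_left hbi, i, j, hij, ?_⟩
      have h0 := hrep 0
      have h1 := hrep 1
      have h2 := hrep 2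
      have h3 := hrep 3
      have h4 := hrep 4
      simp only [Matrix.cons_val_zero, Matrix.cons_val_one, Matrix.head_cons, Matrix.cons_val_two,
        Matrix.tail_cons, Matrix.cons_val_three, Matrix.cons_val_four, Fin.val_zero,
        Fin.val_one] at h0 h1 h2 h3 h4
      norm_num at h0 h1 h2 h3 h4
      simp only [funext_iff, Fin.forall_fin_succ, Matrix.cons_val_zero, Matrix.cons_val_succ,
        Fin.val_succ, Fin.val_zero]
      norm_num
      exact ⟨h0, h1, h2, h3, h4⟩
    · rintro ⟨lam, hlam, i, j, hij, rfl⟩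
      have hlam0 : lam ≠ 0 := by rcases hlam with rfl | rfl | rfl
                                 exacts [one_ne_zero, hω0, hω20]
      obtain ⟨B, hB⟩ : ∃ B : ℕ → F, ∀ k : ℕ, B k = if (k = i.val ∨ k = j.val) then lam else 0 :=
        ⟨_, fun _ => rfl⟩
      have hBsum : B 0 + B 1 + B 2 + B 3 + B 4 = 0 := by
        simp only [hB]
        fin_cases i <;> fin_cases j <;>
          first
            | exact absurd hij (by decide)
            | (norm_num; linear_combination lam * two0)
      constructor
      · refine (hmem _).mpr ⟨B 0, B 0 + B 1, B 0 + B 1 + B 2, B 4, 0, ?_⟩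
        simp only [funext_iff, Fin.forall_fin_succ, Matrix.cons_val_zero, Matrix.cons_val_succ,
          Fin.val_succ, Fin.val_zero]
        norm_num
        refine ⟨?_, ?_, ?_, ?_, ?_⟩
        · rw [← hB 0]
        · rw [← hB 1]; linear_combination (-(B 0)) * two0
        · rw [← hB 2]; linear_combination (-(B 0 + B 1)) * two0
        · rw [← hB 3]; linear_combination B 3 * two0 - hBsum
        · rw [← hB 4]
      · have hwt : hammingNorm (fun t : Fin 10 =>
            if (t.val/2 = i.val ∨ t.val/2 = j.val) then lam else 0) =
            (Finset.univ.filter (fun t : Fin 10 => t.val/2 = i.val ∨ t.val/2 = j.val)).card := by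
          simp only [hammingNorm]
          congr 1
          apply Finset.filter_congr
          intro t _
          by_cases h : (t.val/2 = i.val ∨ t.val/2 = j.val) <;> simp [h, hlam0]
        rw [hwt]
        revert hij
        fin_cases i <;> fin_cases j <;> decide
  refine ⟨hset, ?_⟩
  have hlamf_mem : ∀ k : Fin 3, (![(1:F), ω, ω^2] : Fin 3 → F) k = 1 ∨
      (![(1:F), ω, ω^2] : Fin 3 → F) k = ω ∨ (![(1:F), ω, ω^2] : Fin 3 → F) k = ω^2 := by
    intro k
    fin_cases k <;> simp
  have hlamf0 : ∀ k : Fin 3, (![(1:F), ω, ω^2] : Fin 3 → F) k ≠ 0 := by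
    intro k
    fin_cases k <;> simp only [Matrix.cons_val_zero, Matrix.cons_val_one, Matrix.head_cons,
      Matrix.cons_val_two, Matrix.tail_cons]
    exacts [one_ne_zero, hω0, hω20]
  have hlamf_inj : ∀ a b : Fin 3, (![(1:F), ω, ω^2] : Fin 3 → F) a =
      (![(1:F), ω, ω^2] : Fin 3 → F) b → a = b := by
    intro a b hab
    fin_cases a <;> fin_cases b <;>
      simp only [Matrix.cons_val_zero, Matrix.cons_val_one, Matrix.head_cons,
        Matrix.cons_val_two, Matrix.tail_cons] at hab <;>
      first
        | rfl
        | exact absurd hab hω1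
        | exact absurd hab hω2ω
        | exact absurd hab hω21
        | exact absurd hab (fun h => hω1 h.symm)
        | exact absurd hab (fun h => hω21 h.symm)
        | exact absurd hab (fun h => hω2ω h.symm)
  have hg : ∀ p : {x : Fin 3 × Fin 5 × Fin 5 // x.2.1 < x.2.2},
      (fun t : Fin 10 => if (t.val/2 = p.1.2.1.val ∨ t.val/2 = p.1.2.2.val)
        then (![(1:F), ω, ω^2] : Fin 3 → F) p.1.1 else 0) ∈
        {v : Fin 10 → F | v ∈ E10 ω ∧ hammingNorm v = 4} := by
    intro p
    rw [hset]
    exact ⟨_, hlamf_mem _, p.1.2.1, p.1.2.2, p.2, rfl⟩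
  have heval : ∀ (a b : Fin 5) (μ : F) (m : Fin 5),
      (fun t : Fin 10 => if (t.val/2 = a.val ∨ t.val/2 = b.val) then μ else 0)
        (⟨2*m.val, by omega⟩ : Fin 10) = if (m.val = a.val ∨ m.val = b.val) then μ else 0 := by
    intro a b μ m
    have hd : (2*m.val)/2 = m.val := by omega
    simp only [hd]
  have hbij : Function.Bijective
      (fun p : {x : Fin 3 × Fin 5 × Fin 5 // x.2.1 < x.2.2} =>
        (⟨fun t : Fin 10 => if (t.val/2 = p.1.2.1.val ∨ t.val/2 = p.1.2.2.val)
          then (![(1:F), ω, ω^2] : Fin 3 → F) p.1.1 else 0, hg p⟩ :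
          {v : Fin 10 → F // v ∈ E10 ω ∧ hammingNorm v = 4})) := by
    constructor
    · rintro ⟨⟨k, i, j⟩, hij⟩ ⟨⟨k', i', j'⟩, hij'⟩ h
      simp only [Subtype.mk.injEq] at h
      have hm : ∀ m : Fin 5,
          (if (m.val = i.val ∨ m.val = j.val) then (![(1:F), ω, ω^2] : Fin 3 → F) k else 0) =
          (if (m.val = i'.val ∨ m.val = j'.val) then (![(1:F), ω, ω^2] : Fin 3 → F) k' else 0) := by
        intro m
        rw [← heval i j _ m, ← heval i' j' _ m, h]
      have hii : i.val = i'.val ∨ i.val = j'.val := by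
        by_contra hc
        push_neg at hc
        have := hm i
        rw [if_pos (Or.inl rfl), if_neg (not_or.mpr hc)] at this
        exact hlamf0 k this
      have hjj : j.val = i'.val ∨ j.val = j'.val := by
        by_contra hc
        push_neg at hc
        have := hm j
        rw [if_pos (Or.inr rfl), if_neg (not_or.mpr hc)] at this
        exact hlamf0 k this
      have hii' : i'.val = i.val ∨ i'.val = j.val := by
        by_contra hc
        push_neg at hc
        have := hm i'
        rw [if_pos (Or.inl rfl), if_neg (not_or.mpr hc)] at this
        exact hlamf0 k' this.symm
      have hlt1 : i.val < j.val := hij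
      have hlt2 : i'.val < j'.val := hij'
      have hie : i.val = i'.val := by omega
      have hje : j.val = j'.val := by omega
      have hik : i = i' := Fin.ext hie
      have hjk : j = j' := Fin.ext hje
      subst hik
      subst hjk
      have hkk : k = k' := by
        apply hlamf_inj
        have := hm i
        rwa [if_pos (Or.inl rfl), if_pos (Or.inl rfl)] at this
      subst hkk
      rfl
    · rintro ⟨v, hv⟩
      have hv2 := (Set.ext_iff.mp hset v).mp hv
      obtain ⟨lam, hlam, i, j, hij, rfl⟩ := hv2
      rcases hlam with rfl | rfl | rfl
      · exact ⟨⟨⟨0, i, j⟩, hij⟩, rfl⟩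
      · exact ⟨⟨⟨1, i, j⟩, hij⟩, rfl⟩
      · exact ⟨⟨⟨2, i, j⟩, hij⟩, rfl⟩
  rw [← Nat.card_eq_of_bijective _ hbij, Nat.card_eq_fintype_card]
  decide
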